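/- The number of rooted forests on {1,...,n} in which exactly n−1 of the n vertices are records equals Σ_{m=1}^{n} (n−m)·c(n,m), the sum of reflection lengths of all permutations in S_n. -/

import Mathlib

def IsForestFun {n : ℕ} (f : Fin n → Fin n) : Prop :=
  ∀ v, ∃ k, f (f^[k] v) = f^[k] v

def IsRec {n : ℕ} (f : Fin n → Fin n) (v : Fin n) : Prop :=
  ∀ k, f^[k] v ≤ v

noncomputable def cyclesCount {n : ℕ} (π : Equiv.Perm (Fin n)) : ℕ :=
  π.cycleType.card + (n - π.support.card)

/-- Unsigned Stirling numbers of the first kind. -/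
noncomputable def stirC (n m : ℕ) : ℕ :=
  Nat.card {π : Equiv.Perm (Fin n) // cyclesCount π = m}

namespace S16
open Equiv Finset

variable {n : ℕ}

def Good (u a : Fin n) (f : Fin n → Fin n) : Prop :=
  u < a ∧ f u = a ∧ (∀ v, v ≠ u → f v ≤ v) ∧ ∀ w, u < w → w ≤ a → f w ≠ u

theorem good_main {u a : Fin n} {f : Fin n → Fin n} (h : Good u a f) :
    ∀ m : ℕ, ∀ v : Fin n, (v : ℕ) = m → v ≠ u →
      (∀ k, f^[k] v ≤ v) ∧ (∃ k, f (f^[k] v) = f^[k] v) := by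
  obtain ⟨hua, hfu, hle, hnu⟩ := h
  intro m
  induction m using Nat.strong_induction_on with
  | _ m ih =>
    intro v hvm hvu
    have h1 : f v ≤ v := hle v hvu
    rcases eq_or_lt_of_le h1 with heq | hlt
    · refine ⟨fun k => ?_, ⟨0, by simpa using heq⟩⟩
      rw [Function.iterate_fixed heq]
    · by_cases hfvu : f v = u
      · have huv : u < v := hfvu ▸ hlt
        have hav : a < v := by
          by_contra hc
          push_neg at hc
          exact hnu v huv hc hfvu
        have hanu : a ≠ u := ne_of_gt hua
        obtain ⟨r1, r2⟩ := ih a.val (by exact hvm ▸ hav) a rfl hanu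
        constructor
        · intro k
          match k with
          | 0 => exact le_refl v
          | 1 => simpa [hfvu] using le_of_lt huv
          | (k+2) =>
            have : f^[k+2] v = f^[k] a := by
              rw [Function.iterate_succ_apply, Function.iterate_succ_apply, hfvu, hfu]
            rw [this]
            exact le_trans (r1 k) (le_of_lt hav)
        · obtain ⟨k, hk⟩ := r2
          refine ⟨k + 2, ?_⟩
          rw [Function.iterate_succ_apply, Function.iterate_succ_apply, hfvu, hfu, hk]
      · obtain ⟨r1, r2⟩ := ih (f v).val (by exact hvm ▸ hlt) (f v) rfl hfvu
        constructor
        · intro k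
          match k with
          | 0 => exact le_refl v
          | (k+1) =>
            rw [Function.iterate_succ_apply]
            exact le_trans (r1 k) (le_of_lt hlt)
        · obtain ⟨k, hk⟩ := r2
          exact ⟨k + 1, by rw [Function.iterate_succ_apply, hk]⟩


theorem good_forest {u a : Fin n} {f : Fin n → Fin n} (h : Good u a f) : IsForestFun f := by
  intro v
  by_cases hvu : v = u
  · subst hvu
    obtain ⟨k, hk⟩ := (good_main h a.val a rfl (ne_of_gt h.1)).2
    exact ⟨k + 1, by rw [Function.iterate_succ_apply, h.2.1, hk]⟩
  · exact (good_main h v.val v rfl hvu).2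

theorem good_rec {u a : Fin n} {f : Fin n → Fin n} (h : Good u a f) (v : Fin n) :
    IsRec f v ↔ v ≠ u := by
  constructor
  · rintro hr rfl
    have := hr 1
    simp only [Function.iterate_one] at this
    exact absurd (lt_of_lt_of_le (h.2.1 ▸ h.1) this) (lt_irrefl _)
  · exact fun hvu => (good_main h v.val v rfl hvu).1

theorem good_unique {u a u' a' : Fin n} {f : Fin n → Fin n}
    (h : Good u a f) (h' : Good u' a' f) : u = u' ∧ a = a' := by
  have hu : u = u' := by
    by_contra hne
    have h1 : f u ≤ u := h'.2.2.1 u hne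
    exact absurd (lt_of_lt_of_le (h.2.1 ▸ h.1) h1) (lt_irrefl _)
  subst hu
  exact ⟨rfl, by rw [← h.2.1, h'.2.1]⟩

theorem good_card_rec {u a : Fin n} {f : Fin n → Fin n} (h : Good u a f) :
    Nat.card {v : Fin n // IsRec f v} = n - 1 := by
  classical
  rw [Nat.card_congr (Equiv.subtypeEquivRight (fun v => (good_rec h v).trans Iff.rfl))]
  rw [Nat.card_eq_fintype_card]
  have : Fintype.card {v : Fin n // v ≠ u} = Fintype.card {v : Fin n // ¬ v = u} := rfl
  rw [this, Fintype.card_subtype_compl, Fintype.card_subtype_eq, Fintype.card_fin]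

theorem exists_good {f : Fin n → Fin n} (hF : IsForestFun f)
    (hcard : Nat.card {v : Fin n // IsRec f v} = n - 1) (hn : 1 ≤ n) :
    ∃ u a, Good u a f := by
  classical
  -- there is a unique non-record u
  have hcc : Fintype.card {v : Fin n // ¬ IsRec f v} = 1 := by
    rw [Fintype.card_subtype_compl, Fintype.card_fin]
    have h1 : Fintype.card {x : Fin n // IsRec f x} = n - 1 := by
      rw [← Nat.card_eq_fintype_card]; exact hcard
    have hle : Fintype.card {x : Fin n // IsRec f x} ≤ n := by
      simpa using Fintype.card_subtype_le (fun x : Fin n => IsRec f x)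
    omega
  obtain ⟨⟨u, hu⟩, huniq⟩ := Fintype.card_eq_one_iff.mp hcc
  have huniq' : ∀ w : Fin n, ¬ IsRec f w → w = u := fun w hw =>
    congrArg Subtype.val (huniq ⟨w, hw⟩)
  -- f u > u
  have hufu : u < f u := by
    have hex : ∃ k, u < f^[k] u := by
      by_contra hc
      push_neg at hc
      exact hu (fun k => hc k)
    have hk0spec : u < f^[Nat.find hex] u := Nat.find_spec hex
    have hk0pos : 1 ≤ Nat.find hex := by
      rcases Nat.eq_zero_or_pos (Nat.find hex) with h0 | h1
      · rw [h0] at hk0spec; simp at hk0spec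
      · exact h1
    have hxle : f^[Nat.find hex - 1] u ≤ u := by
      have := Nat.find_min hex (show Nat.find hex - 1 < Nat.find hex by omega)
      push_neg at this
      exact this
    have hfx : f (f^[Nat.find hex - 1] u) = f^[Nat.find hex] u := by
      rw [← Function.iterate_succ_apply' f (Nat.find hex - 1) u]
      congr 1
      omega
    by_cases hxu : f^[Nat.find hex - 1] u = u
    · rw [hxu] at hfx
      rw [hfx]
      exact hk0spec
    · exfalso
      have hrec : IsRec f (f^[Nat.find hex - 1] u) := by
        by_contra hnr
        exact hxu (huniq' _ hnr)
      have h2 := hrec 1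
      simp only [Function.iterate_one] at h2
      rw [hfx] at h2
      exact absurd (lt_of_lt_of_le hk0spec (le_trans h2 hxle)) (lt_irrefl _)
  refine ⟨u, f u, hufu, rfl, ?_, ?_⟩
  · intro v hvu
    have hrec : IsRec f v := by
      by_contra hnr
      exact hvu (huniq' v hnr)
    simpa using hrec 1
  · intro w huw hwa hwu
    have hwnu : w ≠ u := ne_of_gt huw
    have hrec : IsRec f w := by
      by_contra hnr
      exact hwnu (huniq' w hnr)
    rcases eq_or_lt_of_le hwa with heq | hlt
    · -- w = f u, f w = u : 2-cycle, contradicts forest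
      obtain ⟨k, hk⟩ := hF w
      have halt : ∀ k, f^[k] w = w ∨ f^[k] w = u := by
        intro k
        induction k with
        | zero => exact Or.inl rfl
        | succ k ih =>
          rcases ih with h1 | h1
          · right; rw [Function.iterate_succ_apply', h1, hwu]
          · left; rw [Function.iterate_succ_apply', h1, ← heq]
      rcases halt k with h1 | h1
      · rw [h1, hwu] at hk; exact hwnu hk.symm
      · rw [h1] at hk
        rw [show f u = w from heq.symm] at hk
        exact hwnu hk
    · -- w < f u : f^[2] w = f u > w contradicts record
      have h2 : f^[2] w = f u := by
        show f (f^[1] w) = f u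
        simp [hwu]
      have := hrec 2
      rw [h2] at this
      exact absurd (lt_of_le_of_lt this hlt) (lt_irrefl _)


theorem fact_prod {a b : ℕ} (h : a ≤ b) :
    a.factorial * ∏ i ∈ Ico a b, (i + 1) = b.factorial := by
  induction b with
  | zero =>
    have : a = 0 := by omega
    subst this; simp
  | succ b ih =>
    rcases Nat.lt_or_ge a (b + 1) with h1 | h1
    · have h2 : a ≤ b := by omega
      rw [Finset.prod_Ico_succ_top h2, ← mul_assoc, ih h2, Nat.factorial_succ]
      ring
    · have : a = b + 1 := by omega
      subst this; simp

theorem key_prod {u a : ℕ} (hua : u < a) (han : a < n) :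
    (a + 1) * ∏ i ∈ range n, (if i = u then 1 else if u < i ∧ i ≤ a then i else i + 1)
      = n.factorial := by
  have h1 : ∀ S : Finset ℕ, (∀ i ∈ S, i < u) →
      ∏ i ∈ S, (if i = u then 1 else if u < i ∧ i ≤ a then i else i + 1) = ∏ i ∈ S, (i+1) := by
    intro S hS
    refine Finset.prod_congr rfl (fun i hi => ?_)
    have := hS i hi
    rw [if_neg (by omega), if_neg (by omega)]
  have h2 : ∀ S : Finset ℕ, (∀ i ∈ S, u < i ∧ i ≤ a) →
      ∏ i ∈ S, (if i = u then 1 else if u < i ∧ i ≤ a then i else i + 1) = ∏ i ∈ S, i := by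
    intro S hS
    refine Finset.prod_congr rfl (fun i hi => ?_)
    have := hS i hi
    rw [if_neg (by omega), if_pos this]
  have h3 : ∀ S : Finset ℕ, (∀ i ∈ S, a < i) →
      ∏ i ∈ S, (if i = u then 1 else if u < i ∧ i ≤ a then i else i + 1) = ∏ i ∈ S, (i+1) := by
    intro S hS
    refine Finset.prod_congr rfl (fun i hi => ?_)
    have := hS i hi
    rw [if_neg (by omega), if_neg (by omega)]
  rw [Finset.range_eq_Ico]
  rw [← Finset.prod_Ico_consecutive _ (by omega : 0 ≤ a+1) (by omega : a+1 ≤ n)]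
  rw [← Finset.prod_Ico_consecutive _ (by omega : (0:ℕ) ≤ u) (by omega : u ≤ a+1)]
  rw [← Finset.prod_Ico_consecutive _ (by omega : u ≤ u+1) (by omega : u+1 ≤ a+1)]
  rw [h1 (Ico 0 u) (fun i hi => by simp [Finset.mem_Ico] at hi; omega)]
  rw [h2 (Ico (u+1) (a+1)) (fun i hi => by simp [Finset.mem_Ico] at hi; omega)]
  rw [h3 (Ico (a+1) n) (fun i hi => by simp [Finset.mem_Ico] at hi; omega)]
  rw [Nat.Ico_succ_singleton, Finset.prod_singleton, if_pos rfl]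
  have e1 : ∏ i ∈ Ico 0 u, (i + 1) = u.factorial := by
    have := fact_prod (Nat.zero_le u)
    simpa using this
  have e2 : ∏ i ∈ Ico (u+1) (a+1), i = ∏ i ∈ Ico u a, (i + 1) := by
    rw [Finset.prod_Ico_eq_prod_range, Finset.prod_Ico_eq_prod_range]
    have : a + 1 - (u + 1) = a - u := by omega
    rw [this]
    exact Finset.prod_congr rfl (fun i _ => by omega)
  rw [e1, e2, one_mul]
  have e3 : u.factorial * ∏ i ∈ Ico u a, (i + 1) = a.factorial := fact_prod (le_of_lt hua)
  rw [e3, ← mul_assoc, ← Nat.factorial_succ]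
  exact fact_prod (by omega)

theorem card_lhs (hn : 1 ≤ n) :
    Nat.card {f : Fin n → Fin n // IsForestFun f ∧ Nat.card {v : Fin n // IsRec f v} = n - 1}
      = ∑ a : Fin n, (a : ℕ) * ∏ v ∈ univ.erase a, ((v : ℕ) + 1) := by
  classical
  have hiff : ∀ f : Fin n → Fin n,
      (IsForestFun f ∧ Nat.card {v : Fin n // IsRec f v} = n - 1) ↔ ∃ u a, Good u a f := by
    intro f
    constructor
    · rintro ⟨h1, h2⟩; exact exists_good h1 h2 hn
    · rintro ⟨u, a, h⟩; exact ⟨good_forest h, good_card_rec h⟩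
  rw [Nat.card_congr (Equiv.subtypeEquivRight hiff), Nat.card_eq_fintype_card,
    Fintype.card_subtype]
  have hsplit : (univ.filter (fun f : Fin n → Fin n => ∃ u a, Good u a f))
      = ((univ ×ˢ univ).filter (fun p : Fin n × Fin n => p.1 < p.2)).biUnion
          (fun p => univ.filter (fun f => Good p.1 p.2 f)) := by
    ext f
    simp only [mem_biUnion, mem_filter, mem_univ, true_and, Finset.mem_product]
    constructor
    · rintro ⟨u, a, h⟩
      exact ⟨(u, a), h.1, h⟩
    · rintro ⟨p, _, h⟩
      exact ⟨p.1, p.2, h⟩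
  rw [hsplit, Finset.card_biUnion (by
    rintro p hp q hq hpq
    rw [Function.onFun_apply, Finset.disjoint_left]
    intro f hf1 hf2
    simp only [mem_filter, mem_univ, true_and] at hf1 hf2
    obtain ⟨h1, h2⟩ := good_unique hf1 hf2
    exact hpq (Prod.ext h1 h2))]
  have hcard : ∀ u a : Fin n, u < a →
      (univ.filter (fun f : Fin n → Fin n => Good u a f)).card
        = ∏ v ∈ univ.erase a, ((v : ℕ) + 1) := by
    intro u a hua
    have hSe : univ.filter (fun f : Fin n → Fin n => Good u a f)
        = Fintype.piFinset (fun v : Fin n =>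
            if v = u then {a} else if u < v ∧ v ≤ a then (Iic v).erase u else Iic v) := by
      ext f
      simp only [mem_filter, mem_univ, true_and, Fintype.mem_piFinset]
      constructor
      · intro h v
        by_cases h1 : v = u
        · subst h1; simp [h.2.1]
        · rw [if_neg h1]
          by_cases h2 : u < v ∧ v ≤ a
          · rw [if_pos h2]
            simp only [Finset.mem_erase, Finset.mem_Iic]
            exact ⟨h.2.2.2 v h2.1 h2.2, h.2.2.1 v h1⟩
          · rw [if_neg h2]
            simp only [Finset.mem_Iic]
            exact h.2.2.1 v h1
      · intro h
        refine ⟨hua, by simpa using h u, ?_, ?_⟩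
        · intro v hv
          have hv2 := h v
          rw [if_neg hv] at hv2
          by_cases h2 : u < v ∧ v ≤ a
          · rw [if_pos h2] at hv2
            simp only [Finset.mem_erase, Finset.mem_Iic] at hv2
            exact hv2.2
          · rw [if_neg h2] at hv2
            simpa using hv2
        · intro w h1 h2
          have hw := h w
          rw [if_neg (ne_of_gt h1), if_pos ⟨h1, h2⟩] at hw
          simp only [Finset.mem_erase, Finset.mem_Iic] at hw
          exact hw.1
    rw [hSe, Fintype.card_piFinset]
    -- compute each card
    have hval : ∀ v : Fin n,
        (if v = u then ({a} : Finset (Fin n)) else if u < v ∧ v ≤ a then (Iic v).erase u else Iic v).card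
          = (if (v:ℕ) = (u:ℕ) then 1 else if (u:ℕ) < (v:ℕ) ∧ (v:ℕ) ≤ (a:ℕ) then (v:ℕ) else (v:ℕ) + 1) := by
      intro v
      by_cases h1 : v = u
      · subst h1; simp
      · have hn1 : ¬(v:ℕ) = (u:ℕ) := by simpa [Fin.ext_iff] using h1
        by_cases h2 : u < v ∧ v ≤ a
        · have hn2 : (u:ℕ) < (v:ℕ) ∧ (v:ℕ) ≤ (a:ℕ) := ⟨h2.1, h2.2⟩
          rw [if_neg h1, if_pos h2, if_neg hn1, if_pos hn2,
            Finset.card_erase_of_mem (Finset.mem_Iic.mpr (le_of_lt h2.1)), Fin.card_Iic]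
          omega
        · have hn2 : ¬((u:ℕ) < (v:ℕ) ∧ (v:ℕ) ≤ (a:ℕ)) := fun hc => h2 ⟨hc.1, hc.2⟩
          rw [if_neg h1, if_neg h2, if_neg hn1, if_neg hn2, Fin.card_Iic]
    rw [Finset.prod_congr rfl (fun v _ => hval v)]
    -- cancel (a+1)
    have hpos : 0 < (a:ℕ) + 1 := Nat.succ_pos _
    refine Nat.eq_of_mul_eq_mul_left hpos ?_
    have lhs_eq : ((a:ℕ)+1) * ∏ v : Fin n,
        (if (v:ℕ) = (u:ℕ) then 1 else if (u:ℕ) < (v:ℕ) ∧ (v:ℕ) ≤ (a:ℕ) then (v:ℕ) else (v:ℕ) + 1)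
        = n.factorial := by
      rw [Fin.prod_univ_eq_prod_range
        (fun i => if i = (u:ℕ) then 1 else if (u:ℕ) < i ∧ i ≤ (a:ℕ) then i else i + 1) n]
      exact key_prod hua a.isLt
    rw [lhs_eq]
    rw [Finset.mul_prod_erase univ (fun v : Fin n => (v:ℕ)+1) (mem_univ a)]
    rw [Fin.prod_univ_eq_prod_range (fun i => i + 1) n]
    exact (Finset.prod_range_add_one_eq_factorial n).symm
  rw [Finset.sum_congr rfl (fun p hp => by
    simp only [mem_filter, Finset.mem_product] at hp
    exact hcard p.1 p.2 hp.2)]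
  rw [Finset.sum_filter, Finset.sum_product]
  rw [Finset.sum_comm]
  refine Finset.sum_congr rfl (fun a _ => ?_)
  have : ∀ u : Fin n, (if u < a then ∏ v ∈ univ.erase a, ((v : ℕ) + 1) else 0)
      = (if u ∈ Iio a then ∏ v ∈ univ.erase a, ((v : ℕ) + 1) else 0) := by
    intro u; simp [Finset.mem_Iio]
  rw [Finset.sum_congr rfl (fun u _ => this u), Finset.sum_ite_mem]
  rw [Finset.univ_inter, Finset.sum_const, Fin.card_Iio, smul_eq_mul]


/-! ### Permutation side -/

def CMax (π : Equiv.Perm (Fin n)) (v : Fin n) : Prop :=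
  ∀ w, π.SameCycle v w → w ≤ v

def rfun (v : Fin n) (i : ℕ) (x : Fin n) : Fin n :=
  if x.val < v.val then x
  else ⟨v.val + (x.val - v.val + i) % (n - v.val), by
    have h1 : v.val < n := v.isLt
    have h2 := Nat.mod_lt (x.val - v.val + i) (show 0 < n - v.val by omega)
    omega⟩

theorem rfun_lt (v : Fin n) {x : Fin n} (h : x.val < v.val) (i : ℕ) : rfun v i x = x := by
  rw [rfun, if_pos h]

theorem rfun_ge_val (v : Fin n) {x : Fin n} (h : ¬ x.val < v.val) (i : ℕ) :
    (rfun v i x).val = v.val + (x.val - v.val + i) % (n - v.val) := by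
  rw [rfun, if_neg h]

theorem rfun_ge_ge (v : Fin n) {x : Fin n} (h : v ≤ x) (i : ℕ) : v ≤ rfun v i x := by
  rw [Fin.le_def, rfun_ge_val v (not_lt.mpr (Fin.le_def.mp h)) i]
  omega

theorem rfun_comp (v : Fin n) (i j : ℕ) (x : Fin n) :
    rfun v i (rfun v j x) = rfun v (j + i) x := by
  by_cases h : x.val < v.val
  · rw [rfun_lt v h, rfun_lt v h, rfun_lt v h]
  · apply Fin.ext
    have hxv : ¬ (rfun v j x).val < v.val := by rw [rfun_ge_val v h]; omega
    rw [rfun_ge_val v hxv, rfun_ge_val v h, rfun_ge_val v h]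
    have e1 : v.val + (x.val - v.val + j) % (n - v.val) - v.val
        = (x.val - v.val + j) % (n - v.val) := by omega
    rw [e1]
    congr 1
    have e2 : x.val - v.val + (j + i) = (x.val - v.val + j) + i := by ring
    rw [e2]
    exact (Nat.mod_modEq (x.val - v.val + j) (n - v.val)).add_right i

theorem rfun_dvd (v : Fin n) {i : ℕ} (h : (n - v.val) ∣ i) (x : Fin n) : rfun v i x = x := by
  by_cases hx : x.val < v.val
  · exact rfun_lt v hx i
  · apply Fin.ext
    rw [rfun_ge_val v hx]
    have h1 : x.val - v.val < n - v.val := by have := x.isLt; omega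
    obtain ⟨c, rfl⟩ := h
    rw [Nat.add_mul_mod_self_left, Nat.mod_eq_of_lt h1]
    omega

def rho (v : Fin n) (i : ℕ) : Equiv.Perm (Fin n) :=
  ⟨rfun v i, rfun v ((n - v.val) - i % (n - v.val)),
   fun x => by
     rw [rfun_comp]
     refine rfun_dvd v ⟨i / (n - v.val) + 1, ?_⟩ x
     have hk : 0 < n - v.val := by have := v.isLt; omega
     have h1 := Nat.div_add_mod i (n - v.val)
     have h2 := Nat.mod_lt i hk
     have h3 : (n - v.val) * (i / (n - v.val) + 1)
         = (n - v.val) * (i / (n - v.val)) + (n - v.val) := by ring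
     omega,
   fun x => by
     rw [rfun_comp]
     refine rfun_dvd v ⟨i / (n - v.val) + 1, ?_⟩ x
     have hk : 0 < n - v.val := by have := v.isLt; omega
     have h1 := Nat.div_add_mod i (n - v.val)
     have h2 := Nat.mod_lt i hk
     have h3 : (n - v.val) * (i / (n - v.val) + 1)
         = (n - v.val) * (i / (n - v.val)) + (n - v.val) := by ring
     omega⟩

theorem rho_apply (v : Fin n) (i : ℕ) (x : Fin n) : rho v i x = rfun v i x := rfl

theorem rho_inv_apply (v : Fin n) (i : ℕ) (x : Fin n) :
    (rho v i)⁻¹ x = rfun v ((n - v.val) - i % (n - v.val)) x := rfl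

theorem mod_zero_cases {k t i : ℕ} (hk : 0 < k) (ht : t < k) (hi : i < k)
    (h : (t + i) % k = 0) : t + i = 0 ∨ t + i = k := by
  have hd := Nat.dvd_of_mod_eq_zero h
  obtain ⟨c, hc⟩ := hd
  have hc2 : c < 2 := by
    by_contra hcc
    push_neg at hcc
    have := Nat.mul_le_mul_left k hcc
    omega
  match c, hc2 with
  | 0, _ => omega
  | 1, _ => omega

theorem rfun_eq_v_unique (v : Fin n) {m : Fin n} (hm : v ≤ m) {i j : ℕ}
    (hi : i < n - v.val) (hj : j < n - v.val)
    (h1 : rfun v i m = v) (h2 : rfun v j m = v) : i = j := by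
  have hmv : ¬ m.val < v.val := not_lt.mpr (Fin.le_def.mp hm)
  have e1 := congrArg Fin.val h1
  have e2 := congrArg Fin.val h2
  rw [rfun_ge_val v hmv] at e1 e2
  have hk : 0 < n - v.val := by have := v.isLt; omega
  have ht : m.val - v.val < n - v.val := by have := m.isLt; omega
  have d1 := mod_zero_cases hk ht hi (by omega)
  have d2 := mod_zero_cases hk ht hj (by omega)
  omega

theorem exists_rfun_eq_v (v : Fin n) {m : Fin n} (hm : v ≤ m) :
    ∃ i, i < n - v.val ∧ rfun v i m = v := by
  have hk : 0 < n - v.val := by have := v.isLt; omega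
  have htk : m.val - v.val < n - v.val := by have := m.isLt; omega
  refine ⟨((n - v.val) - (m.val - v.val)) % (n - v.val), Nat.mod_lt _ hk, ?_⟩
  apply Fin.ext
  rw [rfun_ge_val v (not_lt.mpr (Fin.le_def.mp hm))]
  rcases Nat.eq_zero_or_pos (m.val - v.val) with h0 | h0
  · rw [h0, Nat.sub_zero, Nat.mod_self, Nat.zero_add, Nat.zero_mod]
    have := Fin.le_def.mp hm
    omega
  · have e1 : ((n - v.val) - (m.val - v.val)) % (n - v.val)
        = (n - v.val) - (m.val - v.val) := Nat.mod_eq_of_lt (by omega)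
    rw [e1]
    have e2 : m.val - v.val + ((n - v.val) - (m.val - v.val)) = n - v.val := by omega
    rw [e2, Nat.mod_self]
    omega

/-! ### First return -/

theorem fret_exists (π : Equiv.Perm (Fin n)) (v : Fin n) : ∃ j, 1 ≤ j ∧ v ≤ (⇑π)^[j] v := by
  refine ⟨orderOf π, orderOf_pos π, ?_⟩
  rw [Equiv.Perm.iterate_eq_pow, pow_orderOf_eq_one]
  exact le_refl v

noncomputable def fret (π : Equiv.Perm (Fin n)) (v : Fin n) : ℕ :=
  Nat.find (fret_exists π v)

theorem fret_pos (π : Equiv.Perm (Fin n)) (v : Fin n) : 1 ≤ fret π v :=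
  (Nat.find_spec (fret_exists π v)).1

theorem fret_ge (π : Equiv.Perm (Fin n)) (v : Fin n) : v ≤ (⇑π)^[fret π v] v :=
  (Nat.find_spec (fret_exists π v)).2

theorem fret_min (π : Equiv.Perm (Fin n)) (v : Fin n) {t : ℕ} (h1 : 1 ≤ t)
    (h2 : t < fret π v) : (⇑π)^[t] v < v := by
  have := Nat.find_min (fret_exists π v) h2
  push_neg at this
  exact lt_of_not_ge (fun hc => absurd (this h1) (not_lt.mpr hc))

noncomputable def wm (π : Equiv.Perm (Fin n)) (v : Fin n) : Fin n := (⇑π)^[fret π v] v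

theorem iter_mod (π : Equiv.Perm (Fin n)) (v : Fin n) (j : ℕ) (hj : 0 < j)
    (hfix : (⇑π)^[j] v = v) : ∀ t, (⇑π)^[t] v = (⇑π)^[t % j] v := by
  intro t
  induction t using Nat.strong_induction_on with
  | _ t ih =>
    rcases Nat.lt_or_ge t j with h | h
    · rw [Nat.mod_eq_of_lt h]
    · have h1 : t = (t - j) + j := by omega
      rw [h1, Function.iterate_add_apply, hfix, ih (t - j) (by omega)]
      congr 1
      exact (Nat.add_mod_right (t - j) j).symm

theorem cmax_iff (π : Equiv.Perm (Fin n)) (v : Fin n) : CMax π v ↔ wm π v = v := by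
  constructor
  · intro h
    have h1 : π.SameCycle v (wm π v) := ⟨(fret π v : ℤ), by
      rw [zpow_natCast, ← Equiv.Perm.iterate_eq_pow]; rfl⟩
    exact le_antisymm (h _ h1) (fret_ge π v)
  · intro h w hw
    obtain ⟨i, hi0, hile, hiw⟩ := Equiv.Perm.SameCycle.exists_pow_eq π hw
    rw [← Equiv.Perm.iterate_eq_pow] at hiw
    rw [← hiw, iter_mod π v (fret π v) (fret_pos π v) h i]
    rcases Nat.eq_zero_or_pos (i % fret π v) with h0 | h0
    · rw [h0]; exact le_refl v
    · exact le_of_lt (fret_min π v h0 (Nat.mod_lt _ (fret_pos π v)))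

theorem fret_mul (π : Equiv.Perm (Fin n)) (v : Fin n) (g : Equiv.Perm (Fin n))
    (hg1 : ∀ x : Fin n, x.val < v.val → g x = x)
    (hg2 : ∀ x : Fin n, v ≤ x → v ≤ g x) :
    fret (g * π) v = fret π v ∧ wm (g * π) v = g (wm π v) := by
  have key : ∀ t, t ≤ fret π v →
      (t < fret π v → (⇑(g * π))^[t] v = (⇑π)^[t] v) ∧
      (t = fret π v → (⇑(g * π))^[t] v = g ((⇑π)^[t] v)) := by
    intro t
    induction t with
    | zero =>
      refine fun _ => ⟨fun _ => rfl, fun h0 => ?_⟩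
      exact absurd h0.symm (by have := fret_pos π v; omega)
    | succ t ih =>
      intro ht
      have iht := ih (by omega)
      constructor
      · intro hlt
        rw [Function.iterate_succ_apply', iht.1 (by omega), Equiv.Perm.mul_apply,
          ← Function.iterate_succ_apply' π t v]
        exact hg1 _ (fret_min π v (by omega) hlt)
      · intro heq
        rw [Function.iterate_succ_apply', iht.1 (by omega), Equiv.Perm.mul_apply,
          ← Function.iterate_succ_apply' π t v]
  have hP : 1 ≤ fret π v ∧ v ≤ (⇑(g * π))^[fret π v] v := by
    refine ⟨fret_pos π v, ?_⟩
    rw [(key _ le_rfl).2 rfl]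
    exact hg2 _ (fret_ge π v)
  have hmin : ∀ t, t < fret π v → ¬(1 ≤ t ∧ v ≤ (⇑(g * π))^[t] v) := by
    rintro t ht ⟨ht1, ht2⟩
    rw [(key t (le_of_lt ht)).1 ht] at ht2
    exact absurd ht2 (not_le.mpr (fret_min π v ht1 ht))
  have hfr : fret (g * π) v = fret π v := by
    rw [fret, Nat.find_eq_iff]
    exact ⟨hP, fun t ht => hmin t ht⟩
  refine ⟨hfr, ?_⟩
  rw [wm, hfr, (key _ le_rfl).2 rfl]
  rfl

theorem card_cmax_v (hn : 1 ≤ n) (v : Fin n) :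
    Nat.card {σ : Equiv.Perm (Fin n) // CMax σ v} * (n - v.val) = n.factorial := by
  classical
  have hk : 0 < n - v.val := by have := v.isLt; omega
  have hrho1 : ∀ (i : ℕ) (x : Fin n), x.val < v.val → rho v i x = x :=
    fun i x h => rfun_lt v h i
  have hrho2 : ∀ (i : ℕ) (x : Fin n), v ≤ x → v ≤ rho v i x :=
    fun i x h => rfun_ge_ge v h i
  have hrhoinv1 : ∀ (i : ℕ) (x : Fin n), x.val < v.val → (rho v i)⁻¹ x = x :=
    fun i x h => rfun_lt v h _
  have hrhoinv2 : ∀ (i : ℕ) (x : Fin n), v ≤ x → v ≤ (rho v i)⁻¹ x :=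
    fun i x h => rfun_ge_ge v h _
  set F : {σ : Equiv.Perm (Fin n) // CMax σ v} × Fin (n - v.val) → Equiv.Perm (Fin n) :=
    fun p => (rho v p.2.val)⁻¹ * p.1.val with hF
  have hinj : Function.Injective F := by
    rintro ⟨⟨σ, hσ⟩, i⟩ ⟨⟨τ, hτ⟩, j⟩ h
    simp only [hF] at h
    have w1 : wm ((rho v i.val)⁻¹ * σ) v = (rho v i.val)⁻¹ (wm σ v) :=
      (fret_mul σ v _ (hrhoinv1 i.val) (hrhoinv2 i.val)).2
    have w2 : wm ((rho v j.val)⁻¹ * τ) v = (rho v j.val)⁻¹ (wm τ v) :=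
      (fret_mul τ v _ (hrhoinv1 j.val) (hrhoinv2 j.val)).2
    have hwσ : wm σ v = v := (cmax_iff σ v).mp hσ
    have hwτ : wm τ v = v := (cmax_iff τ v).mp hτ
    have hx : (rho v i.val)⁻¹ v = (rho v j.val)⁻¹ v := by
      have a1 : (rho v i.val)⁻¹ (wm σ v) = (rho v j.val)⁻¹ (wm τ v) := by
        rw [← w1, ← w2, h]
      rwa [hwσ, hwτ] at a1
    have hxv : v ≤ (rho v i.val)⁻¹ v := hrhoinv2 i.val v le_rfl
    have h1 : rfun v i.val ((rho v i.val)⁻¹ v) = v := by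
      have := Equiv.apply_symm_apply (rho v i.val) v
      exact this
    have h2 : rfun v j.val ((rho v i.val)⁻¹ v) = v := by
      rw [hx]
      have := Equiv.apply_symm_apply (rho v j.val) v
      exact this
    have hij : i.val = j.val := rfun_eq_v_unique v hxv i.isLt j.isLt h1 h2
    have hijf : i = j := Fin.ext hij
    subst hijf
    have : σ = τ := mul_left_cancel h
    simp [this]
  have hsurj : Function.Surjective F := by
    intro π
    obtain ⟨i, hik, hiv⟩ := exists_rfun_eq_v v (fret_ge π v)
    have hσ : CMax (rho v i * π) v := by
      rw [cmax_iff, (fret_mul π v (rho v i) (hrho1 i) (hrho2 i)).2]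
      exact hiv
    refine ⟨⟨⟨rho v i * π, hσ⟩, ⟨i, hik⟩⟩, ?_⟩
    simp only [hF]
    exact inv_mul_cancel_left _ _
  have hcardeq := Fintype.card_of_bijective ⟨hinj, hsurj⟩
  rw [Fintype.card_prod, Fintype.card_fin] at hcardeq
  have hcp : Fintype.card (Equiv.Perm (Fin n)) = n.factorial := by
    rw [Fintype.card_perm, Fintype.card_fin]
  rw [Nat.card_eq_fintype_card, ← hcp, ← hcardeq]


theorem card_cmax (π : Equiv.Perm (Fin n)) :
    Nat.card {v : Fin n // CMax π v} = cyclesCount π := by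
  classical
  rw [Nat.card_eq_fintype_card, Fintype.card_subtype]
  have hfix : ∀ v : Fin n, v ∉ π.support → CMax π v := by
    intro v hv w hw
    rw [Equiv.Perm.notMem_support] at hv
    obtain ⟨i, hi⟩ := hw
    rw [← hi, Equiv.Perm.zpow_apply_eq_self_of_apply_eq_self hv]
  have hsplit := Finset.card_filter_add_card_filter_not
    (s := univ.filter (fun v => CMax π v)) (p := fun v => v ∈ π.support)
  have hnotsupp : ((univ.filter (fun v => CMax π v)).filter (fun a => a ∉ π.support))
      = π.supportᶜ := by
    ext v
    simp only [mem_filter, mem_univ, true_and, Finset.mem_compl]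
    exact ⟨fun h => h.2, fun h => ⟨hfix v h, h⟩⟩
  have hsupp : ((univ.filter (fun v => CMax π v)).filter (fun v => v ∈ π.support)).card
      = π.cycleFactorsFinset.card := by
    refine Finset.card_bij (fun v _ => π.cycleOf v) ?_ ?_ ?_
    · intro v hv
      simp only [mem_filter, mem_univ, true_and] at hv
      exact Equiv.Perm.cycleOf_mem_cycleFactorsFinset_iff.mpr hv.2
    · intro v hv w hw heq
      change π.cycleOf v = π.cycleOf w at heq
      simp only [mem_filter, mem_univ, true_and] at hv hw
      have h1 : π.SameCycle v w := by
        have : w ∈ (π.cycleOf w).support :=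
          Equiv.Perm.mem_support_cycleOf_iff.mpr ⟨Equiv.Perm.SameCycle.refl _ _, hw.2⟩
        rw [← heq] at this
        exact (Equiv.Perm.mem_support_cycleOf_iff.mp this).1
      exact le_antisymm (hw.1 v h1.symm) (hv.1 w h1)
    · intro c hc
      have hcyc : c.IsCycle := (Equiv.Perm.mem_cycleFactorsFinset_iff.mp hc).1
      have hne : c.support.Nonempty := by
        obtain ⟨x, hx1, -⟩ := hcyc
        exact ⟨x, Equiv.Perm.mem_support.mpr hx1⟩
      set v := c.support.max' hne with hv
      have hv1 : v ∈ c.support := Finset.max'_mem _ _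
      have hv2 : v ∈ π.support := Equiv.Perm.mem_cycleFactorsFinset_support_le hc hv1
      have hc2 : c = π.cycleOf v := Equiv.Perm.cycle_is_cycleOf hv1 hc
      have hcm : CMax π v := by
        intro w hw
        have : w ∈ (π.cycleOf v).support :=
          Equiv.Perm.mem_support_cycleOf_iff.mpr ⟨hw, hv2⟩
        rw [← hc2] at this
        exact Finset.le_max' _ _ this
      exact ⟨v, by simp only [mem_filter, mem_univ, true_and]; exact ⟨hcm, hv2⟩, hc2.symm⟩
  have hct : Multiset.card π.cycleType = π.cycleFactorsFinset.card := by
    simp [Equiv.Perm.cycleType]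
  have hcompl : (π.supportᶜ).card = n - π.support.card := by
    rw [Finset.card_compl, Fintype.card_fin]
  have hB : ((univ.filter (fun v => CMax π v)).filter (fun a => a ∉ π.support)).card
      = n - π.support.card := by rw [hnotsupp, hcompl]
  rw [cyclesCount, hct]
  omega

theorem multiset_card_le_sum (s : Multiset ℕ) (h : ∀ x ∈ s, 1 ≤ x) :
    Multiset.card s ≤ s.sum := by
  induction s using Multiset.induction with
  | empty => simp
  | cons a t ih =>
    simp only [Multiset.card_cons, Multiset.sum_cons]
    have h1 := h a (by simp)
    have h2 := ih (fun x hx => h x (by simp [hx]))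
    omega

theorem cyclesCount_mem (hn : 1 ≤ n) (π : Equiv.Perm (Fin n)) :
    cyclesCount π ∈ Icc 1 n := by
  have hsum := Equiv.Perm.sum_cycleType π
  have hcard : Multiset.card π.cycleType ≤ π.cycleType.sum :=
    multiset_card_le_sum _ (fun x hx =>
      le_trans (by norm_num) (Equiv.Perm.two_le_of_mem_cycleType hx))
  have hsupp : π.support.card ≤ n := by
    have h := Finset.card_le_univ π.support
    rwa [Fintype.card_fin] at h

  simp only [mem_Icc, cyclesCount]
  constructor
  · rcases Nat.eq_zero_or_pos (Multiset.card π.cycleType) with h0 | h0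
    · have h1 : π = 1 := Equiv.Perm.card_cycleType_eq_zero.mp h0
      subst h1
      rw [Equiv.Perm.support_one]
      simp
      omega
    · omega
  · omega

theorem perm_side (hn : 1 ≤ n) :
    ∑ m ∈ Finset.Icc 1 n, (n - m) * stirC n m
      = ∑ v : Fin n, (n.factorial - Nat.card {σ : Equiv.Perm (Fin n) // CMax σ v}) := by
  classical
  have h1 : ∀ m, stirC n m
      = ((univ : Finset (Equiv.Perm (Fin n))).filter (fun π => cyclesCount π = m)).card := by
    intro m
    rw [stirC, Nat.card_eq_fintype_card, Fintype.card_subtype]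
  have h2 : ∑ m ∈ Finset.Icc 1 n, (n - m) * stirC n m
      = ∑ π : Equiv.Perm (Fin n), (n - cyclesCount π) := by
    rw [← Finset.sum_fiberwise_of_maps_to (g := fun π => cyclesCount π)
      (fun π _ => cyclesCount_mem hn π)
      (fun π => n - cyclesCount π)]
    refine Finset.sum_congr rfl (fun m _ => ?_)
    rw [h1, Finset.sum_congr rfl (fun π hπ => by rw [(mem_filter.mp hπ).2]),
      Finset.sum_const, smul_eq_mul, mul_comm]
  rw [h2]
  have h3 : ∀ π : Equiv.Perm (Fin n), n - cyclesCount π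
      = ((univ : Finset (Fin n)).filter (fun x => ¬ CMax π x)).card := by
    intro π
    have hc : ((univ : Finset (Fin n)).filter (fun x => CMax π x)).card = cyclesCount π := by
      rw [← Fintype.card_subtype, ← Nat.card_eq_fintype_card]
      exact card_cmax π
    have hsplit := Finset.card_filter_add_card_filter_not
      (s := (univ : Finset (Fin n))) (p := fun x => CMax π x)
    rw [Finset.card_univ, Fintype.card_fin] at hsplit
    omega
  rw [Finset.sum_congr rfl (fun π _ => h3 π)]
  have h4 : ∑ π : Equiv.Perm (Fin n), ((univ : Finset (Fin n)).filter (fun x => ¬ CMax π x)).card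
      = ∑ x : Fin n, ((univ : Finset (Equiv.Perm (Fin n))).filter (fun π => ¬ CMax π x)).card := by
    simp_rw [Finset.card_filter]
    exact Finset.sum_comm
  rw [h4]
  refine Finset.sum_congr rfl (fun x _ => ?_)
  have hsplit := Finset.card_filter_add_card_filter_not
    (s := (univ : Finset (Equiv.Perm (Fin n)))) (p := fun π => CMax π x)
  have hcardu : ((univ : Finset (Equiv.Perm (Fin n)))).card = n.factorial := by
    rw [Finset.card_univ, Fintype.card_perm, Fintype.card_fin]
  have hcs : Nat.card {σ : Equiv.Perm (Fin n) // CMax σ x}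
      = ((univ : Finset (Equiv.Perm (Fin n))).filter (fun π => CMax π x)).card := by
    rw [Nat.card_eq_fintype_card, Fintype.card_subtype]
  omega

end S16

theorem stmt16 (n : ℕ) (hn : 1 ≤ n) :
    Nat.card {f : Fin n → Fin n // IsForestFun f ∧
        Nat.card {v : Fin n // IsRec f v} = n - 1} =
      ∑ m ∈ Finset.Icc 1 n, (n - m) * stirC n m := by
  classical
  rw [S16.card_lhs hn, S16.perm_side hn]
  have hQ : ∀ a : Fin n, ((a : ℕ) + 1) * ∏ v ∈ Finset.univ.erase a, ((v : ℕ) + 1)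
      = n.factorial := by
    intro a
    rw [Finset.mul_prod_erase Finset.univ (fun v : Fin n => (v : ℕ) + 1) (Finset.mem_univ a)]
    rw [Fin.prod_univ_eq_prod_range (fun i => i + 1) n]
    exact Finset.prod_range_add_one_eq_factorial n
  have hC : ∀ v : Fin n, Nat.card {σ : Equiv.Perm (Fin n) // S16.CMax σ v} * (n - v.val)
      = n.factorial := fun v => S16.card_cmax_v hn v
  have key : ∀ a : Fin n,
      (a : ℕ) * ∏ v ∈ Finset.univ.erase a, ((v : ℕ) + 1)
        = n.factorial - Nat.card {σ : Equiv.Perm (Fin n) // S16.CMax σ (Fin.rev a)} := by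
    intro a
    have h1 := hC (Fin.rev a)
    rw [Fin.val_rev] at h1
    have h2 : n - (n - ((a : ℕ) + 1)) = (a : ℕ) + 1 := by
      have := a.isLt; omega
    rw [h2] at h1
    have h3 := hQ a
    have h4 : Nat.card {σ : Equiv.Perm (Fin n) // S16.CMax σ (Fin.rev a)}
        = ∏ v ∈ Finset.univ.erase a, ((v : ℕ) + 1) :=
      Nat.eq_of_mul_eq_mul_right (by omega : 0 < (a:ℕ)+1) (by rw [h1, ← h3]; ring)
    rw [h4]
    have h5 : (a : ℕ) * ∏ v ∈ Finset.univ.erase a, ((v : ℕ) + 1)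
        + ∏ v ∈ Finset.univ.erase a, ((v : ℕ) + 1) = n.factorial := by
      rw [← hQ a]; ring
    omega
  rw [Finset.sum_congr rfl (fun a _ => key a)]
  exact Fintype.sum_bijective Fin.rev Fin.rev_involutive.bijective _ _ (fun a => rfl)
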